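/- Let σ ≥ 0, ε > 0, and suppose there exists a nonempty set S ⊆ V with ∑_{i=1}^r m(S, G_i) ≥ σ|S|; let γ* = min{ Δ(S, 𝒢) : S ⊆ V nonempty, ∑_{i=1}^r m(S, G_i) ≥ σ|S| }. If 0 ≤ L ≤ γ* < U, U − L ≤ εL, and S₀ minimizes S ↦ b(S, 𝒢) − U|S| over all S ⊆ V with ∑_{i=1}^r m(S, G_i) ≥ σ|S|, then S₀ ≠ ∅ and Δ(S₀, 𝒢) ≤ (1 + ε)γ*. -/
import Mathlib


/-- Number of edges of `G` with both endpoints in `S`. -/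
noncomputable def edgeCnt {V : Type*} (G : SimpleGraph V) (S : Finset V) : ℕ :=
  {e ∈ G.edgeSet | ∀ v ∈ e, v ∈ S}.ncard

/-- Density of the subgraph induced by `S` in `G`. -/
noncomputable def dens {V : Type*} (G : SimpleGraph V) (S : Finset V) : ℝ :=
  (edgeCnt G S : ℝ) / (S.card : ℝ)

/-- Total density across the graph snapshots. -/
noncomputable def densTot {V : Type*} {r : ℕ} (G : Fin r → SimpleGraph V) (S : Finset V) : ℝ :=
  ∑ i, dens (G i) S

/-- Difference between the maximum and minimum induced density. -/
noncomputable def densDiff {V : Type*} {r : ℕ} (G : Fin r → SimpleGraph V) (S : Finset V) : ℝ :=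
  (⨆ i, dens (G i) S) - (⨅ i, dens (G i) S)

/-- Difference between the maximum and minimum induced edge count. -/
noncomputable def edgeDiff {V : Type*} {r : ℕ} (G : Fin r → SimpleGraph V) (S : Finset V) : ℝ :=
  (⨆ i, (edgeCnt (G i) S : ℝ)) - (⨅ i, (edgeCnt (G i) S : ℝ))

lemma edgeCnt_empty {V : Type*} (G : SimpleGraph V) : edgeCnt G (∅ : Finset V) = 0 := by
  have h : {e ∈ G.edgeSet | ∀ v ∈ e, v ∈ (∅ : Finset V)} = ∅ := by
    ext e
    simp only [Set.mem_setOf_eq, Set.mem_empty_iff_false, iff_false, not_and]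
    intro _ h
    induction e with
    | h x y => exact absurd (h x (by simp)) (by simp)
  rw [edgeCnt, h, Set.ncard_empty]

lemma densDiff_eq {V : Type*} {r : ℕ} (hr : 1 ≤ r) (G : Fin r → SimpleGraph V)
    (S : Finset V) : densDiff G S = edgeDiff G S / (S.card : ℝ) := by
  haveI : Nonempty (Fin r) := ⟨⟨0, hr⟩⟩
  have hinv : (0 : ℝ) ≤ ((S.card : ℝ))⁻¹ := by positivity
  have h1 : (⨆ i, dens (G i) S) = (⨆ i, (edgeCnt (G i) S : ℝ)) * ((S.card : ℝ))⁻¹ := by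
    rw [Real.iSup_mul_of_nonneg hinv]
    simp [dens, div_eq_mul_inv]
  have h2 : (⨅ i, dens (G i) S) = (⨅ i, (edgeCnt (G i) S : ℝ)) * ((S.card : ℝ))⁻¹ := by
    rw [Real.iInf_mul_of_nonneg hinv]
    simp [dens, div_eq_mul_inv]
  rw [densDiff, h1, h2, edgeDiff, ← sub_mul, div_eq_mul_inv]

theorem stmt8 {V : Type*} [Fintype V] {r : ℕ} (hr : 1 ≤ r)
    (G : Fin r → SimpleGraph V) (σ ε L U γstar : ℝ) (hσ : 0 ≤ σ) (hε : 0 < ε)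
    (hex : ∃ S : Finset V, S.Nonempty ∧ σ * (S.card : ℝ) ≤ ∑ i, (edgeCnt (G i) S : ℝ))
    (hstar : IsLeast
      {x : ℝ | ∃ S : Finset V, S.Nonempty ∧
        σ * (S.card : ℝ) ≤ (∑ i, (edgeCnt (G i) S : ℝ)) ∧ densDiff G S = x}
      γstar)
    (hL0 : 0 ≤ L) (hLγ : L ≤ γstar) (hγU : γstar < U) (hUL : U - L ≤ ε * L)
    (S₀ : Finset V) (hfeas : σ * (S₀.card : ℝ) ≤ ∑ i, (edgeCnt (G i) S₀ : ℝ))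
    (hmin : ∀ S : Finset V, σ * (S.card : ℝ) ≤ (∑ i, (edgeCnt (G i) S : ℝ)) →
      edgeDiff G S₀ - U * (S₀.card : ℝ) ≤ edgeDiff G S - U * (S.card : ℝ)) :
    S₀.Nonempty ∧ densDiff G S₀ ≤ (1 + ε) * γstar := by
  haveI : Nonempty (Fin r) := ⟨⟨0, hr⟩⟩
  obtain ⟨⟨T, hTne, hTfeas, hTd⟩, -⟩ := hstar
  have hTcard : (0 : ℝ) < (T.card : ℝ) := by
    exact_mod_cast Finset.card_pos.mpr hTne
  have hTeq : edgeDiff G T = γstar * (T.card : ℝ) := by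
    have := densDiff_eq hr G T
    rw [hTd] at this
    field_simp at this
    linarith [this]
  have hkey : edgeDiff G S₀ - U * (S₀.card : ℝ) < 0 := by
    have h := hmin T hTfeas
    have : edgeDiff G T - U * (T.card : ℝ) = (γstar - U) * (T.card : ℝ) := by
      rw [hTeq]; ring
    nlinarith
  have hne : S₀.Nonempty := by
    by_contra hne
    rw [Finset.not_nonempty_iff_eq_empty] at hne
    subst hne
    have h0 : edgeDiff G (∅ : Finset V) = 0 := by
      simp [edgeDiff, edgeCnt_empty]
    rw [h0] at hkey
    simp at hkey
  refine ⟨hne, ?_⟩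
  have hcard : (0 : ℝ) < (S₀.card : ℝ) := by
    exact_mod_cast Finset.card_pos.mpr hne
  have hdd : densDiff G S₀ = edgeDiff G S₀ / (S₀.card : ℝ) := densDiff_eq hr G S₀
  have hU : densDiff G S₀ < U := by
    rw [hdd, div_lt_iff₀ hcard]
    nlinarith
  nlinarith
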